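/- Define Q_{S,1}^θ(α, β) = 2 c₁ k (a_θ α − b_θ β) + c k² (1 − d_θ²/(4c²)) + ē_S and Q_{S,2}^θ(α, β) = 4 c β² − 2 k d_θ α + Q_{S,1}^θ(α, β). Then for every (α, β) with α ≠ 0 and β² − α² < (k/(2c)) d_θ α ≤ α² + β², one has Q_S^θ(α, β) = c((α² + β²)/α − k d_θ/(2c))² + Q_{S,1}^θ(α, β) = c((β² − α²)/α − k d_θ/(2c))² + Q_{S,2}^θ(α, β); consequently Q_S^θ is continuous on ℝ². -/

import Mathlib

set_option maxHeartbeats 1600000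


/-- Splay-bend-case context: `c = c₁ + c₂`, `aθ = cos 2θ`, `bθ = sin 2θ`,
`dθ = c₁ aθ − c − c₂`,
`fS α β γ = c(α² + 2β² + γ²) + 2c|αγ − β²| − k dθ (α + γ) + 2c₁ k (aθ α − bθ β) + c k² + ē_S`
and `Q α β = ⨅ γ, fS α β γ`. -/
theorem stmt12 (c₁ c₂ k θ eS : ℝ) (hc₁ : 0 < c₁) (hc₂ : 0 < c₂)
    (hθ : 0 ≤ θ ∧ θ < Real.pi) (heS : 0 ≤ eS)
    (c aθ bθ dθ : ℝ) (hc : c = c₁ + c₂)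
    (haθ : aθ = Real.cos (2 * θ)) (hbθ : bθ = Real.sin (2 * θ))
    (hdθ : dθ = c₁ * aθ - c - c₂)
    (fS : ℝ → ℝ → ℝ → ℝ)
    (hfS : ∀ α β γ : ℝ, fS α β γ =
      c * (α ^ 2 + 2 * β ^ 2 + γ ^ 2) + 2 * c * |α * γ - β ^ 2|
        - k * dθ * (α + γ) + 2 * c₁ * k * (aθ * α - bθ * β) + c * k ^ 2 + eS)
    (Q : ℝ → ℝ → ℝ) (hQ : ∀ α β : ℝ, Q α β = ⨅ γ : ℝ, fS α β γ)
    (QS₁ QS₂ : ℝ → ℝ → ℝ)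
    (hQS₁ : ∀ α β : ℝ, QS₁ α β =
      2 * c₁ * k * (aθ * α - bθ * β) + c * k ^ 2 * (1 - dθ ^ 2 / (4 * c ^ 2)) + eS)
    (hQS₂ : ∀ α β : ℝ, QS₂ α β = 4 * c * β ^ 2 - 2 * k * dθ * α + QS₁ α β) :
    (∀ α β : ℝ, α ≠ 0 → β ^ 2 - α ^ 2 < (k / (2 * c)) * dθ * α →
      (k / (2 * c)) * dθ * α ≤ α ^ 2 + β ^ 2 →
      Q α β = c * ((α ^ 2 + β ^ 2) / α - k * dθ / (2 * c)) ^ 2 + QS₁ α β ∧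
      Q α β = c * ((β ^ 2 - α ^ 2) / α - k * dθ / (2 * c)) ^ 2 + QS₂ α β) ∧
    Continuous (fun p : ℝ × ℝ => Q p.1 p.2) := by
  have hc0 : 0 < c := by rw [hc]; linarith
  have hcne : c ≠ 0 := ne_of_gt hc0
  obtain ⟨m, hm⟩ : ∃ m : ℝ, m = k * dθ / (2 * c) := ⟨_, rfl⟩
  rw [show (fun p : ℝ × ℝ => Q p.1 p.2) = fun p : ℝ × ℝ => Q p.1 p.2 from rfl]
  rw [← hm]
  have hkd : k * dθ = 2 * c * m := by rw [hm]; field_simp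
  have hfS' : ∀ α β γ : ℝ, fS α β γ = c * (γ ^ 2 - 2 * m * γ) + 2 * c * |α * γ - β ^ 2|
      + (c * (α ^ 2 + 2 * β ^ 2) - 2 * c * m * α + 2 * c₁ * k * (aθ * α - bθ * β)
        + c * k ^ 2 + eS) := by
    intro α β γ
    rw [hfS]
    linear_combination (-(α + γ)) * hkd
  have hQS₁' : ∀ α β : ℝ, QS₁ α β =
      2 * c₁ * k * (aθ * α - bθ * β) + c * k ^ 2 - c * m ^ 2 + eS := by
    intro α β
    rw [hQS₁, hm]
    field_simp
    ring
  -- a generic minimization principle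
  have hmin : ∀ (α β V γ0 : ℝ), (∀ γ, V ≤ fS α β γ) → fS α β γ0 = V → Q α β = V := by
    intro α β V γ0 hlb hat
    rw [hQ]
    refine le_antisymm ?_ (le_ciInf hlb)
    calc (⨅ γ, fS α β γ) ≤ fS α β γ0 :=
          ciInf_le ⟨V, by rintro x ⟨γ, rfl⟩; exact hlb γ⟩ γ0
      _ = V := hat
  -- the key explicit formula for Q
  have key : ∀ α β : ℝ, Q α β =
      (c * (α ^ 2 + 2 * β ^ 2) - 2 * c * m * α + 2 * c₁ * k * (aθ * α - bθ * β)
        + c * k ^ 2 + eS)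
      + c * (2 * |m * α - β ^ 2| - α ^ 2 - m ^ 2)
      + c * (max (α ^ 2 - |m * α - β ^ 2|) 0) ^ 2 / α ^ 2 := by
    intro α β
    by_cases hr : α ^ 2 ≤ |m * α - β ^ 2|
    · -- r = 0 case
      have hmax : max (α ^ 2 - |m * α - β ^ 2|) 0 = 0 := max_eq_right (by linarith)
      rw [hmax]
      rw [zero_pow (two_ne_zero), mul_zero, zero_div, add_zero]
      rcases abs_cases (m * α - β ^ 2) with ⟨he, hsgn⟩ | ⟨he, hsgn⟩
      · -- s ≥ 0, s ≥ α², minimizer γ0 = m - α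
        rw [he] at hr ⊢
        apply hmin α β _ (m - α)
        · intro γ
          rw [hfS']
          rcases abs_cases (α * γ - β ^ 2) with ⟨hu, husgn⟩ | ⟨hu, husgn⟩ <;> rw [hu]
          · nlinarith [mul_nonneg hc0.le (sq_nonneg (γ - m + α))]
          · nlinarith [mul_nonneg hc0.le (sq_nonneg (γ - m + α)),
              mul_nonneg hc0.le (show (0:ℝ) ≤ β ^ 2 - α * γ by linarith)]
        · rw [hfS']
          have habs : |α * (m - α) - β ^ 2| = α * (m - α) - β ^ 2 :=
            abs_of_nonneg (by nlinarith)
          rw [habs]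
          ring
      · -- s < 0, -s ≥ α², minimizer γ0 = m + α
        rw [he] at hr ⊢
        apply hmin α β _ (m + α)
        · intro γ
          rw [hfS']
          rcases abs_cases (α * γ - β ^ 2) with ⟨hu, husgn⟩ | ⟨hu, husgn⟩ <;> rw [hu]
          · nlinarith [mul_nonneg hc0.le (sq_nonneg (γ - m - α)),
              mul_nonneg hc0.le husgn]
          · nlinarith [mul_nonneg hc0.le (sq_nonneg (γ - m - α))]
        · rw [hfS']
          have habs : |α * (m + α) - β ^ 2| = -(α * (m + α) - β ^ 2) :=
            abs_of_nonpos (by nlinarith)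
          rw [habs]
          ring
    · -- kink case: |s| < α², so α ≠ 0, minimizer γ0 = β²/α
      push_neg at hr
      have hα2 : 0 < α ^ 2 := lt_of_le_of_lt (abs_nonneg _) hr
      have hα : α ≠ 0 := by
        intro h; rw [h] at hα2; simp at hα2
      obtain ⟨hsl, hsr⟩ := abs_lt.mp hr
      have hmax : max (α ^ 2 - |m * α - β ^ 2|) 0 = α ^ 2 - |m * α - β ^ 2| :=
        max_eq_left (by linarith)
      rw [hmax]
      have hval : (c * (α ^ 2 + 2 * β ^ 2) - 2 * c * m * α + 2 * c₁ * k * (aθ * α - bθ * β)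
            + c * k ^ 2 + eS)
          + c * (2 * |m * α - β ^ 2| - α ^ 2 - m ^ 2)
          + c * (α ^ 2 - |m * α - β ^ 2|) ^ 2 / α ^ 2
          = (c * (α ^ 2 + 2 * β ^ 2) - 2 * c * m * α + 2 * c₁ * k * (aθ * α - bθ * β)
            + c * k ^ 2 + eS)
          + c * ((m * α - β ^ 2) ^ 2 / α ^ 2 - m ^ 2) := by
        have hα2' : α ^ 2 ≠ 0 := ne_of_gt hα2
        field_simp
        linear_combination c * sq_abs (α * m - β ^ 2)
      rw [hval]
      apply hmin α β _ (β ^ 2 / α)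
      · intro γ
        rw [hfS']
        have hcore : (m * α - β ^ 2) ^ 2 / α ^ 2 - m ^ 2
            ≤ γ ^ 2 - 2 * m * γ + 2 * |α * γ - β ^ 2| := by
          rw [sub_le_iff_le_add, div_le_iff₀ hα2]
          rcases abs_cases (α * γ - β ^ 2) with ⟨hu, husgn⟩ | ⟨hu, husgn⟩ <;> rw [hu]
          · nlinarith [mul_nonneg husgn
              (show (0:ℝ) ≤ (α * γ - β ^ 2) - 2 * (m * α - β ^ 2) + 2 * α ^ 2 by linarith)]
          · nlinarith [mul_nonneg (neg_nonneg.mpr (le_of_lt husgn))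
              (neg_nonneg.mpr (show (α * γ - β ^ 2) - 2 * (m * α - β ^ 2) - 2 * α ^ 2 ≤ 0 by linarith))]
        nlinarith [mul_le_mul_of_nonneg_left hcore (le_of_lt hc0)]
      · rw [hfS']
        have h0 : α * (β ^ 2 / α) - β ^ 2 = 0 := by field_simp; ring
        rw [h0, abs_zero]
        field_simp
        ring
  constructor
  · intro α β hα h1 h2
    have hmα : (k / (2 * c)) * dθ * α = m * α := by rw [hm]; ring
    rw [hmα] at h1 h2
    have hsl : -α ^ 2 < m * α - β ^ 2 := by linarith
    have hsr : m * α - β ^ 2 ≤ α ^ 2 := by linarith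
    have habs : |m * α - β ^ 2| ≤ α ^ 2 := abs_le.mpr ⟨le_of_lt hsl, hsr⟩
    have hmax : max (α ^ 2 - |m * α - β ^ 2|) 0 = α ^ 2 - |m * α - β ^ 2| :=
      max_eq_left (by linarith)
    have hQv := key α β
    rw [hmax] at hQv
    have hval2 : Q α β =
        (c * (α ^ 2 + 2 * β ^ 2) - 2 * c * m * α + 2 * c₁ * k * (aθ * α - bθ * β)
          + c * k ^ 2 + eS)
        + c * ((m * α - β ^ 2) ^ 2 / α ^ 2 - m ^ 2) := by
      rw [hQv]
      field_simp
      nlinarith [sq_abs (α * m - β ^ 2)]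
    constructor
    · rw [hval2, hQS₁']
      field_simp
      ring
    · have hQS₂' : QS₂ α β = 4 * c * β ^ 2 - 4 * c * m * α + QS₁ α β := by
        rw [hQS₂]
        linear_combination (-(2 * α)) * hkd
      rw [hval2, hQS₂', hQS₁']
      field_simp
      ring
  · -- continuity
    have hfun : (fun p : ℝ × ℝ => Q p.1 p.2) = fun p : ℝ × ℝ =>
        ((c * (p.1 ^ 2 + 2 * p.2 ^ 2) - 2 * c * m * p.1
            + 2 * c₁ * k * (aθ * p.1 - bθ * p.2) + c * k ^ 2 + eS)
          + c * (2 * |m * p.1 - p.2 ^ 2| - p.1 ^ 2 - m ^ 2))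
        + c * (max (p.1 ^ 2 - |m * p.1 - p.2 ^ 2|) 0) ^ 2 / p.1 ^ 2 := by
      funext p
      rw [key p.1 p.2]
    rw [hfun]
    apply Continuous.add
    · apply Continuous.add
      · fun_prop
      · have : Continuous fun p : ℝ × ℝ => |m * p.1 - p.2 ^ 2| := by
          apply continuous_abs.comp
          fun_prop
        fun_prop
    · -- the tricky term
      set F : ℝ × ℝ → ℝ := fun p =>
        c * (max (p.1 ^ 2 - |m * p.1 - p.2 ^ 2|) 0) ^ 2 / p.1 ^ 2 with hF
      have hFnonneg : ∀ p : ℝ × ℝ, 0 ≤ F p := by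
        intro p
        apply div_nonneg _ (sq_nonneg _)
        positivity
      have hFle : ∀ p : ℝ × ℝ, F p ≤ c * p.1 ^ 2 := by
        intro p
        by_cases hp : p.1 ^ 2 = 0
        · simp [hF, hp]
        · have hp2 : 0 < p.1 ^ 2 := lt_of_le_of_ne (sq_nonneg _) (Ne.symm hp)
          rw [hF, div_le_iff₀ hp2]
          have h1 : max (p.1 ^ 2 - |m * p.1 - p.2 ^ 2|) 0 ≤ p.1 ^ 2 :=
            max_le (by nlinarith [abs_nonneg (m * p.1 - p.2 ^ 2)]) (le_of_lt hp2)
          have h2 : 0 ≤ max (p.1 ^ 2 - |m * p.1 - p.2 ^ 2|) 0 := le_max_right _ _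
          have h3 : (max (p.1 ^ 2 - |m * p.1 - p.2 ^ 2|) 0) ^ 2 ≤ (p.1 ^ 2) ^ 2 := by
            nlinarith
          nlinarith [mul_le_mul_of_nonneg_left h3 hc0.le]
      have hmaxc : Continuous fun p : ℝ × ℝ =>
          max (p.1 ^ 2 - |m * p.1 - p.2 ^ 2|) 0 := by
        apply Continuous.max _ continuous_const
        apply Continuous.sub (by fun_prop)
        exact continuous_abs.comp (by fun_prop)
      rw [continuous_iff_continuousAt]
      intro p
      by_cases hp : p.1 = 0
      · have hFp : F p = 0 := by
          have hmax0 : max (p.1 ^ 2 - |m * p.1 - p.2 ^ 2|) 0 = 0 :=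
            max_eq_right (by nlinarith [abs_nonneg (m * p.1 - p.2 ^ 2)])
          simp [hF, hmax0]
        unfold ContinuousAt
        rw [hFp]
        apply squeeze_zero hFnonneg hFle
        have hcont : Continuous fun q : ℝ × ℝ => c * q.1 ^ 2 := by fun_prop
        rw [show (0:ℝ) = c * p.1 ^ 2 by rw [hp]; ring]
        exact hcont.tendsto p
      · apply ContinuousAt.div
        · exact ((continuous_const.mul (hmaxc.pow 2))).continuousAt
        · fun_prop
        · exact pow_ne_zero _ hp
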